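/- Let B_n = ℝ·Id ⊕ L_n ⊆ gl(n,ℝ), where L_n is the span of the matrix units E_{i,n} for i = 1,…,n−1 and n ≥ 3. Then B_n is a maximal abelian subalgebra of gl(n,ℝ) of dimension n, yet for every α ∈ (ℝⁿ)* the orbit {α∘a : a ∈ B_n} spans a subspace of dimension at most 2; in particular, the semidirect sum B_n ⋉ ℝⁿ is not a Frobenius Lie algebra. -/

import Mathlib

theorem std_apply {N : ℕ} (i j k l : Fin N) :
    Matrix.single i j (1:ℝ) k l = if i = k ∧ j = l then 1 else 0 := rfl

theorem span_pair_finrank_le {K V : Type*} [Field K] [AddCommGroup V] [Module K V] (x y : V) :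
    Module.finrank K (Submodule.span K ({x, y} : Set V)) ≤ 2 := by
  classical
  have h1 : ({x, y} : Set V) = ((({x, y} : Finset V) : Set V)) := by simp
  rw [h1]
  refine le_trans (finrank_span_finset_le_card _) ?_
  exact le_trans (Finset.card_insert_le _ _) (by simp)

theorem aux_mem (hn : 3 ≤ n) (B : Submodule ℝ (Matrix (Fin n) (Fin n) ℝ))
    (hB : B = Submodule.span ℝ {(1 : Matrix (Fin n) (Fin n) ℝ)} ⊔ Submodule.span ℝ (Set.range fun i : Fin (n - 1) =>
      Matrix.single (⟨i.1, lt_of_lt_of_le i.2 (Nat.sub_le n 1)⟩ : Fin n)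
        (⟨n - 1, Nat.sub_lt (by omega) one_pos⟩ : Fin n) (1 : ℝ)))
    (a : Matrix (Fin n) (Fin n) ℝ) :
    a ∈ B ↔ ((∀ k, a k k = a ⟨n-1, Nat.sub_lt (by omega) one_pos⟩ ⟨n-1, Nat.sub_lt (by omega) one_pos⟩) ∧
      (∀ k l, k ≠ l → l ≠ (⟨n-1, Nat.sub_lt (by omega) one_pos⟩ : Fin n) → a k l = 0)) := by
  subst hB
  rw [← Submodule.span_union]
  constructor
  · intro h
    induction h using Submodule.span_induction with
    | mem x hx =>
      rcases hx with hx | ⟨i, rfl⟩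
      · simp only [Set.mem_singleton_iff] at hx
        subst hx
        refine ⟨fun k => by simp [Matrix.one_apply], fun k l hkl hl => by simp [Matrix.one_apply, hkl]⟩
      · constructor
        · intro k
          have h1 : ¬((⟨i.1, by omega⟩ : Fin n) = k ∧ (⟨n-1, by omega⟩ : Fin n) = k) := by
            rintro ⟨rfl, h⟩
            have := i.2
            simp [Fin.ext_iff] at h
            omega
          have h2 : ¬((⟨i.1, by omega⟩ : Fin n) = (⟨n-1, by omega⟩ : Fin n) ∧ (⟨n-1, by omega⟩ : Fin n) = (⟨n-1, by omega⟩ : Fin n)) := by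
            rintro ⟨h, -⟩
            have := i.2
            simp [Fin.ext_iff] at h
            omega
          simp only [Matrix.single_apply_of_ne (h := h1),
            Matrix.single_apply_of_ne (h := h2)]
        · intro k l hkl hl
          have h3 : ¬((⟨i.1, by omega⟩ : Fin n) = k ∧ (⟨n-1, by omega⟩ : Fin n) = l) := by
            rintro ⟨-, h⟩
            exact hl h.symm
          simp only [Matrix.single_apply_of_ne (h := h3)]
    | zero => simp
    | add x y hx hy ihx ihy =>
      refine ⟨fun k => by simp [ihx.1 k, ihy.1 k], fun k l h1 h2 => by simp [ihx.2 k l h1 h2, ihy.2 k l h1 h2]⟩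
    | smul c x hx ih =>
      refine ⟨fun k => by simp [ih.1 k], fun k l h1 h2 => by simp [ih.2 k l h1 h2]⟩
  · rintro ⟨h1, h2⟩
    have key : a = a ⟨n-1, by omega⟩ ⟨n-1, by omega⟩ • (1 : Matrix (Fin n) (Fin n) ℝ) +
        ∑ i : Fin (n-1), a ⟨i.1, by omega⟩ ⟨n-1, by omega⟩ •
          Matrix.single (⟨i.1, by omega⟩ : Fin n) (⟨n - 1, by omega⟩ : Fin n) (1 : ℝ) := by
      ext k l
      simp only [Matrix.add_apply, Matrix.smul_apply, Matrix.one_apply, Matrix.sum_apply,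
        std_apply, smul_eq_mul, mul_ite, mul_one, mul_zero]
      by_cases hkl : k = l
      · subst hkl
        rw [if_pos rfl]
        have hz : ∀ i ∈ (Finset.univ : Finset (Fin (n-1))), (if (⟨i.1, by omega⟩ : Fin n) = k ∧ (⟨n-1, by omega⟩ : Fin n) = k then a ⟨i.1, by omega⟩ ⟨n-1, by omega⟩ else 0) = 0 := by
          intro i _
          rw [if_neg]
          rintro ⟨rfl, h⟩
          have := i.2
          simp [Fin.ext_iff] at h
          omega
        rw [Finset.sum_eq_zero hz, h1 k, add_zero]
      · rw [if_neg hkl]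
        by_cases hl : l = (⟨n-1, by omega⟩ : Fin n)
        · subst hl
          have hk' : k.1 < n - 1 := by
            have := k.2
            rcases Nat.lt_or_ge k.1 (n-1) with h | h
            · exact h
            · exfalso; apply hkl; simp [Fin.ext_iff]; omega
          rw [Finset.sum_eq_single (⟨k.1, hk'⟩ : Fin (n-1))]
          · rw [if_pos ⟨by simp [Fin.ext_iff], rfl⟩, zero_add]
          · intro b _ hb
            rw [if_neg]
            rintro ⟨h, -⟩
            apply hb
            simp [Fin.ext_iff] at h ⊢
            omega
          · intro h; exact absurd (Finset.mem_univ _) h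
        · rw [h2 k l hkl hl]
          have hz : ∀ i ∈ (Finset.univ : Finset (Fin (n-1))), (if (⟨i.1, by omega⟩ : Fin n) = k ∧ (⟨n-1, by omega⟩ : Fin n) = l then a ⟨i.1, by omega⟩ ⟨n-1, by omega⟩ else 0) = 0 := by
            intro i _
            rw [if_neg]
            rintro ⟨-, h⟩
            exact hl h.symm
          rw [Finset.sum_eq_zero hz, zero_add]
    rw [key]
    apply Submodule.add_mem
    · exact Submodule.smul_mem _ _ (Submodule.subset_span (Or.inl rfl))
    · apply Submodule.sum_mem
      intro i _
      exact Submodule.smul_mem _ _ (Submodule.subset_span (Or.inr ⟨i, rfl⟩))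

set_option maxHeartbeats 1600000 in
/-- For `n ≥ 3`, `B_n = ℝ·Id ⊕ L_n ⊆ gl(n,ℝ)` with `L_n = span(E_{i,n}, i = 1,…,n-1)` is a
maximal abelian subalgebra of dimension `n`, yet every coadjoint orbit
`{α∘a : a ∈ B_n}` spans a subspace of dimension at most `2`; in particular
`B_n ⋉ ℝⁿ` is not a Frobenius Lie algebra. -/
theorem stmt19 {n : ℕ} (hn : 3 ≤ n)
    (L B : Submodule ℝ (Matrix (Fin n) (Fin n) ℝ))
    (hL : L = Submodule.span ℝ (Set.range fun i : Fin (n - 1) =>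
      Matrix.single (⟨i.1, by have := i.2; omega⟩ : Fin n)
        (⟨n - 1, by omega⟩ : Fin n) (1 : ℝ)))
    (hB : B = Submodule.span ℝ {(1 : Matrix (Fin n) (Fin n) ℝ)} ⊔ L) :
    (∀ a ∈ B, ∀ b ∈ B, a * b = b * a) ∧
    (∀ c : Matrix (Fin n) (Fin n) ℝ, (∀ a ∈ B, c * a = a * c) → c ∈ B) ∧
    Module.finrank ℝ B = n ∧
    (∀ α : Module.Dual ℝ (Fin n → ℝ),
      Module.finrank ℝ (Submodule.span ℝ
        {f : Module.Dual ℝ (Fin n → ℝ) | ∃ a ∈ B, f = α ∘ₗ (Matrix.mulVecLin a)}) ≤ 2) ∧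
    ¬ ∃ β : (B × (Fin n → ℝ)) →ₗ[ℝ] ℝ,
      ∀ u : B × (Fin n → ℝ),
        (∀ v : B × (Fin n → ℝ),
          -β ((0 : B), (u.1 : Matrix (Fin n) (Fin n) ℝ).mulVec v.2 -
            (v.1 : Matrix (Fin n) (Fin n) ℝ).mulVec u.2) = 0) → u = 0 := by
  subst hL
  have hmem := aux_mem hn B hB
  set ln : Fin n := ⟨n - 1, by omega⟩ with hln
  -- mulVec formula
  have hmv : ∀ a ∈ B, ∀ y : Fin n → ℝ,
      a.mulVec y = fun k => a ln ln * y k + y ln * (if k = ln then 0 else a k ln) := by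
    intro a ha y
    obtain ⟨h1, h2⟩ := (hmem a).1 ha
    funext k
    show ∑ l, a k l * y l = _
    by_cases hk : k = ln
    · subst hk
      rw [Finset.sum_eq_single ln]
      · simp
      · intro l _ hl
        rw [h2 ln l (Ne.symm hl) hl, zero_mul]
      · intro h; exact absurd (Finset.mem_univ _) h
    · rw [Finset.sum_eq_add_of_mem k ln (Finset.mem_univ _) (Finset.mem_univ _) hk]
      · rw [h1 k, if_neg hk]; ring
      · intro l _ ⟨hlk, hlln⟩
        rw [h2 k l (Ne.symm hlk) hlln, zero_mul]
  have hlnne : ∀ i : Fin (n-1), ln ≠ (⟨i.1, by omega⟩ : Fin n) := by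
    intro i
    have := i.2
    simp only [hln, Fin.ext_iff, ne_eq]
    omega
  -- Part 1: abelian
  have part1 : ∀ a ∈ B, ∀ b ∈ B, a * b = b * a := by
    have hBs : B = Submodule.span ℝ ({(1 : Matrix (Fin n) (Fin n) ℝ)} ∪ Set.range fun i : Fin (n - 1) =>
        Matrix.single (⟨i.1, by omega⟩ : Fin n) ln (1 : ℝ)) := by
      rw [hB, Submodule.span_union]
    intro a ha
    rw [hBs] at ha
    induction ha using Submodule.span_induction with
    | mem x hx =>
      intro b hb
      rw [hBs] at hb
      induction hb using Submodule.span_induction with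
      | mem y hy =>
        rcases hx with hx | ⟨i, rfl⟩
        · simp only [Set.mem_singleton_iff] at hx; subst hx; rw [one_mul, mul_one]
        · rcases hy with hy | ⟨j, rfl⟩
          · simp only [Set.mem_singleton_iff] at hy; subst hy; rw [one_mul, mul_one]
          · rw [Matrix.single_mul_single_of_ne (h := hlnne j) (d := 1),
              Matrix.single_mul_single_of_ne (h := hlnne i) (d := 1)]
      | zero => rw [mul_zero, zero_mul]
      | add y z hy hz ihy ihz => rw [mul_add, add_mul, ihy, ihz]
      | smul r y hy ih => rw [Matrix.mul_smul, Matrix.smul_mul, ih]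
    | zero => intro b hb; rw [zero_mul, mul_zero]
    | add x y hx hy ihx ihy => intro b hb; rw [add_mul, mul_add, ihx b hb, ihy b hb]
    | smul r x hx ih => intro b hb; rw [Matrix.smul_mul, Matrix.mul_smul, ih b hb]
  refine ⟨part1, ?_, ?_, ?_, ?_⟩
  · -- Part 2: maximal abelian
    intro c hc
    have hgen : ∀ j : Fin n, j ≠ ln →
        c * Matrix.single j ln 1 = Matrix.single j ln 1 * c := by
      intro j hj
      apply hc
      rw [hB]
      have hj' : j.1 < n - 1 := by
        have := j.2
        simp only [hln, Fin.ext_iff, ne_eq] at hj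
        omega
      exact Submodule.mem_sup_right (Submodule.subset_span ⟨⟨j.1, hj'⟩, rfl⟩)
    rw [hmem]
    constructor
    · intro k
      by_cases hk : k = ln
      · subst hk; rfl
      · have h := congrFun (congrFun (hgen k hk) k) ln
        simpa using h
    · intro k l hkl hl
      have h := congrFun (congrFun (hgen l hl) k) ln
      rw [Matrix.mul_single_apply_same,
        Matrix.single_mul_apply_of_ne (h := hkl)] at h
      simpa using h
  · -- Part 3: finrank = n
    classical
    set f : Fin n → Matrix (Fin n) (Fin n) ℝ :=
      fun j => if j = ln then 1 else Matrix.single j ln 1 with hfdef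
    have hfln : f ln = 1 := by simp only [hfdef]; simp
    have hfne : ∀ j, j ≠ ln → f j = Matrix.single j ln 1 := by
      intro j hj
      simp only [hfdef]
      rw [if_neg hj]
    have hspan : Submodule.span ℝ (Set.range f) = B := by
      apply le_antisymm
      · rw [Submodule.span_le]
        rintro x ⟨j, rfl⟩
        by_cases hj : j = ln
        · subst hj
          rw [hfln, hB]
          exact Submodule.mem_sup_left (Submodule.subset_span rfl)
        · rw [hfne j hj, hB]
          have hj' : j.1 < n - 1 := by
            have := j.2
            simp only [hln, Fin.ext_iff, ne_eq] at hj
            omega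
          exact Submodule.mem_sup_right (Submodule.subset_span ⟨⟨j.1, hj'⟩, rfl⟩)
      · rw [hB, sup_le_iff]
        constructor
        · rw [Submodule.span_le]
          rintro x hx
          simp only [Set.mem_singleton_iff] at hx
          subst hx
          exact Submodule.subset_span ⟨ln, hfln⟩
        · rw [Submodule.span_le]
          rintro x ⟨i, rfl⟩
          apply Submodule.subset_span
          refine ⟨⟨i.1, by omega⟩, ?_⟩
          rw [hfne _ (Ne.symm (hlnne i))]
    have hli : LinearIndependent ℝ f := by
      rw [Fintype.linearIndependent_iff]
      intro g hg j
      have hentry : ∀ k l : Fin n, ∑ i, g i * f i k l = 0 := by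
        intro k l
        have h := congrFun (congrFun hg k) l
        rw [Matrix.sum_apply] at h
        simpa [Matrix.smul_apply] using h
      by_cases hj : j = ln
      · subst hj
        have h := hentry ln ln
        rw [Finset.sum_eq_single ln] at h
        · rw [hfln] at h
          simpa using h
        · intro i _ hi
          rw [hfne i hi, Matrix.single_apply_of_ne (h := by
            rintro ⟨h1, -⟩; exact hi h1), mul_zero]
        · intro h'; exact absurd (Finset.mem_univ _) h'
      · have h := hentry j ln
        rw [Finset.sum_eq_single j] at h
        · rw [hfne j hj, Matrix.single_apply_same] at h
          simpa using h
        · intro i _ hi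
          by_cases hiln : i = ln
          · subst hiln
            rw [hfln, Matrix.one_apply_ne hj, mul_zero]
          · rw [hfne i hiln, Matrix.single_apply_of_ne (h := by
              rintro ⟨h1, -⟩; exact hi h1), mul_zero]
        · intro h'; exact absurd (Finset.mem_univ _) h'
    rw [← hspan, finrank_span_eq_card hli, Fintype.card_fin]
  · -- Part 4: orbit finrank ≤ 2
    intro α
    have key : {f : Module.Dual ℝ (Fin n → ℝ) | ∃ a ∈ B, f = α ∘ₗ (Matrix.mulVecLin a)} ⊆
        ↑(Submodule.span ℝ ({α, LinearMap.proj ln} : Set (Module.Dual ℝ (Fin n → ℝ)))) := by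
      rintro f ⟨a, ha, rfl⟩
      have hf : α ∘ₗ Matrix.mulVecLin a = a ln ln • α +
          (α (fun k => if k = ln then 0 else a k ln)) • LinearMap.proj ln := by
        apply LinearMap.ext
        intro y
        simp only [LinearMap.comp_apply, Matrix.mulVecLin_apply, LinearMap.add_apply,
          LinearMap.smul_apply, LinearMap.proj_apply, smul_eq_mul]
        rw [hmv a ha y]
        have : (fun k => a ln ln * y k + y ln * (if k = ln then 0 else a k ln)) =
            a ln ln • y + y ln • (fun k => if k = ln then 0 else a k ln) := by
          funext k; simp [mul_comm]
        rw [this, map_add, map_smul, map_smul, smul_eq_mul, smul_eq_mul]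
        ring
      rw [hf]
      apply Submodule.add_mem
      · exact Submodule.smul_mem _ _ (Submodule.subset_span (by simp))
      · exact Submodule.smul_mem _ _ (Submodule.subset_span (by simp))
    calc Module.finrank ℝ (Submodule.span ℝ _) ≤
        Module.finrank ℝ (Submodule.span ℝ ({α, LinearMap.proj ln} : Set (Module.Dual ℝ (Fin n → ℝ)))) :=
          Submodule.finrank_mono (Submodule.span_le.2 key)
      _ ≤ 2 := span_pair_finrank_le _ _
  · -- Part 5: not Frobenius
    rintro ⟨β, hβ⟩
    have h0 : (⟨0, by omega⟩ : Fin n) ≠ ln := by simp [hln, Fin.ext_iff]; omega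
    have h1 : (⟨1, by omega⟩ : Fin n) ≠ ln := by simp [hln, Fin.ext_iff]; omega
    obtain ⟨t, htln, htα, htne⟩ : ∃ t : Fin n → ℝ,
        t ln = 0 ∧ β ((0 : B), t) = 0 ∧ t ≠ 0 := by
      set e0 : Fin n → ℝ := Pi.single ⟨0, by omega⟩ 1 with he0
      set e1 : Fin n → ℝ := Pi.single ⟨1, by omega⟩ 1 with he1
      have he0ln : e0 ln = 0 := Pi.single_eq_of_ne (Ne.symm h0) 1
      have he1ln : e1 ln = 0 := Pi.single_eq_of_ne (Ne.symm h1) 1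
      have he00 : e0 ⟨0, by omega⟩ = 1 := Pi.single_eq_same _ _
      have he11 : e1 ⟨1, by omega⟩ = 1 := Pi.single_eq_same _ _
      have hne10 : (⟨1, by omega⟩ : Fin n) ≠ (⟨0, by omega⟩ : Fin n) := by
        simp [Fin.ext_iff]
      have he01 : e0 ⟨1, by omega⟩ = 0 := Pi.single_eq_of_ne hne10 1
      by_cases hc : β ((0 : B), e0) = 0
      · refine ⟨e0, he0ln, hc, ?_⟩
        intro h
        have h' := congrFun h ⟨0, by omega⟩
        rw [he00] at h'
        exact one_ne_zero h'
      · set c0 : ℝ := β ((0 : B), e0) with hc0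
        set c1 : ℝ := β ((0 : B), e1) with hc1
        refine ⟨c0 • e1 - c1 • e0, ?_, ?_, ?_⟩
        · rw [Pi.sub_apply, Pi.smul_apply, Pi.smul_apply, he0ln, he1ln]
          simp
        · have hsplit : ((0 : B), c0 • e1 - c1 • e0) =
              c0 • ((0 : B), e1) - c1 • ((0 : B), e0) := by
            refine Prod.ext ?_ rfl
            simp
          rw [hsplit, map_sub, map_smul, map_smul, smul_eq_mul, smul_eq_mul, ← hc0, ← hc1]
          ring
        · intro h
          have h' := congrFun h ⟨1, by omega⟩
          rw [Pi.sub_apply, Pi.smul_apply, Pi.smul_apply, he11, he01] at h'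
          simp only [smul_eq_mul, mul_one, mul_zero, sub_zero, Pi.zero_apply] at h'
          exact hc h'
    set a : Matrix (Fin n) (Fin n) ℝ := Matrix.of fun k l => if l = ln then t k else 0 with ha
    have haB : a ∈ B := by
      rw [hmem]
      constructor
      · intro k
        by_cases hk : k = ln
        · subst hk; rfl
        · show (if k = ln then t k else 0) = (if ln = ln then t ln else 0)
          rw [if_neg hk, if_pos rfl, htln]
      · intro k l _ hl
        show (if l = ln then t k else 0) = 0
        rw [if_neg hl]
    have hamv : ∀ y : Fin n → ℝ, a.mulVec y = y ln • t := by
      intro y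
      rw [hmv a haB y]
      funext k
      have hz : a ln ln = 0 := by show (if ln = ln then t ln else 0) = 0; simp [htln]
      rw [hz]
      by_cases hk : k = ln
      · subst hk; simp [htln]
      · show 0 * y k + y ln * (if k = ln then 0 else a k ln) = (y ln • t) k
        have hkln : a k ln = t k := by show (if ln = ln then t k else 0) = t k; simp
        rw [if_neg hk, hkln, Pi.smul_apply, smul_eq_mul]; ring
    have hu : ((⟨a, haB⟩ : B), (0 : Fin n → ℝ)) = 0 := by
      apply hβ (⟨a, haB⟩, 0)
      intro v
      simp only
      rw [Matrix.mulVec_zero, sub_zero, hamv v.2]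
      have hsplit : ((0 : B), v.2 ln • t) = v.2 ln • ((0 : B), t) := by
        refine Prod.ext ?_ rfl
        simp
      rw [hsplit, map_smul, smul_eq_mul, htα, mul_zero, neg_zero]
    have haz : a = 0 := congrArg Subtype.val (congrArg Prod.fst hu)
    apply htne
    funext k
    have h' := congrFun (congrFun haz k) ln
    simpa [ha] using h'
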